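/- If α : ℝ → ℝ is locally Lipschitz, strictly increasing, and α(0) = 0, and ψ : [0, ∞) → ℝ is C¹ with ψ(0) > 0 and ψ'(t) ≥ -α(ψ(t)), then ψ(t) > 0 for all t ≥ 0 (strict positivity is preserved). -/

import Mathlib

/-- If α is locally Lipschitz, strictly increasing with α(0) = 0, and ψ is C¹ on [0,∞)
with ψ(0) > 0 and ψ'(t) ≥ -α(ψ(t)), then ψ(t) > 0 for all t ≥ 0. -/
theorem stmt17 (α : ℝ → ℝ) (hlip : LocallyLipschitz α) (hm : StrictMono α) (h0 : α 0 = 0)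
    (ψ ψ' : ℝ → ℝ) (hd : ∀ t ≥ 0, HasDerivAt ψ (ψ' t) t)
    (hc : ContinuousOn ψ' (Set.Ici 0))
    (hψ0 : 0 < ψ 0) (hineq : ∀ t ≥ 0, ψ' t ≥ -α (ψ t)) :
    ∀ t ≥ 0, 0 < ψ t := by
  intro t ht
  by_contra hpos
  push_neg at hpos
  set S : Set ℝ := {u | 0 ≤ u ∧ ψ u ≤ 0} with hS
  have hcont : ContinuousOn ψ (Set.Ici 0) := fun u hu =>
    ((hd u hu).continuousAt).continuousWithinAt
  have hSclosed : IsClosed S := by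
    have hEq : S = Set.Ici 0 ∩ ψ ⁻¹' Set.Iic 0 := by
      ext u; simp [hS, Set.mem_Ici, Set.mem_Iic]
    rw [hEq]
    exact hcont.preimage_isClosed_of_isClosed isClosed_Ici isClosed_Iic
  have hne : S.Nonempty := ⟨t, ht, hpos⟩
  have hbdd : BddBelow S := ⟨0, fun u hu => hu.1⟩
  set t₀ := sInf S with ht₀def
  have ht₀S : t₀ ∈ S := hSclosed.csInf_mem hne hbdd
  have ht₀0 : (0:ℝ) ≤ t₀ := ht₀S.1
  have hψt₀ : ψ t₀ ≤ 0 := ht₀S.2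
  have ht₀pos : 0 < t₀ := by
    rcases lt_or_eq_of_le ht₀0 with h | h
    · exact h
    · exact absurd hψt₀ (by rw [← h]; exact not_le.2 hψ0)
  have hbefore : ∀ u, 0 ≤ u → u < t₀ → 0 < ψ u := by
    intro u hu hut
    by_contra h
    push_neg at h
    exact absurd (csInf_le hbdd ⟨hu, h⟩) (not_le.2 hut)
  -- Lipschitz bound near 0
  obtain ⟨K, U, hU, hKlip⟩ := hlip 0
  obtain ⟨ε, hε, hball⟩ := Metric.mem_nhds_iff.1 hU
  have hαle : ∀ y : ℝ, 0 ≤ y → y < ε → α y ≤ (K : ℝ) * y := by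
    intro y hy hyε
    have h0mem : (0:ℝ) ∈ U := hball (Metric.mem_ball_self hε)
    have hymem : y ∈ U := hball (by simpa [Real.dist_eq, abs_of_nonneg hy] using hyε)
    have hdist := hKlip.dist_le_mul y hymem 0 h0mem
    rw [Real.dist_eq, Real.dist_eq, h0, sub_zero, sub_zero] at hdist
    calc α y ≤ |α y| := le_abs_self _
      _ ≤ (K : ℝ) * |y| := hdist
      _ = (K : ℝ) * y := by rw [abs_of_nonneg hy]
  -- choose s close to t₀
  obtain ⟨δ, hδ, hδprop⟩ := Metric.continuousAt_iff.1 ((hd t₀ ht₀0).continuousAt) ε hε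
  set s : ℝ := max 0 (t₀ - δ/2) with hsdef
  have hs0 : (0:ℝ) ≤ s := le_max_left _ _
  have hst₀ : s < t₀ := by
    apply max_lt ht₀pos
    linarith
  have hsmall : ∀ u, s < u → u ≤ t₀ → ψ u < ε := by
    intro u hsu hut
    have h1 : t₀ - δ/2 ≤ s := le_max_right _ _
    have hdistu : dist u t₀ < δ := by
      rw [Real.dist_eq, abs_lt]; constructor <;> linarith
    have := hδprop hdistu
    rw [Real.dist_eq, abs_lt] at this
    linarith
  -- the auxiliary function g
  set g : ℝ → ℝ := fun u => ψ u * Real.exp ((K : ℝ) * u) with hgdef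
  have hgderiv : ∀ u, 0 ≤ u →
      HasDerivAt g ((ψ' u + (K : ℝ) * ψ u) * Real.exp ((K : ℝ) * u)) u := by
    intro u hu
    have hexp : HasDerivAt (fun x : ℝ => Real.exp ((K : ℝ) * x))
        (Real.exp ((K : ℝ) * u) * (K : ℝ)) u :=
      (Real.hasDerivAt_exp ((K : ℝ) * u)).comp u
        (by simpa using (hasDerivAt_id u).const_mul (K : ℝ))
    have : HasDerivAt (fun y => ψ y * Real.exp ((K : ℝ) * y))
        (ψ' u * Real.exp ((K : ℝ) * u) + ψ u * (Real.exp ((K : ℝ) * u) * (K : ℝ))) u :=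
      (hd u hu).mul hexp
    convert this using 1
    ring
  have hmono : MonotoneOn g (Set.Icc s t₀) := by
    apply monotoneOn_of_deriv_nonneg (convex_Icc s t₀)
    · intro u hu
      exact ((hgderiv u (hs0.trans hu.1)).continuousAt).continuousWithinAt
    · intro u hu
      rw [interior_Icc] at hu
      exact ((hgderiv u (hs0.trans hu.1.le)).differentiableAt).differentiableWithinAt
    · intro u hu
      rw [interior_Icc] at hu
      have hu0 : (0:ℝ) ≤ u := hs0.trans hu.1.le
      rw [(hgderiv u hu0).deriv]
      have hψu : 0 < ψ u := hbefore u hu0 hu.2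
      have hψuε : ψ u < ε := hsmall u hu.1 hu.2.le
      have h1 : α (ψ u) ≤ (K : ℝ) * ψ u := hαle _ hψu.le hψuε
      have h2 : ψ' u ≥ -α (ψ u) := hineq u hu0
      have : 0 ≤ ψ' u + (K : ℝ) * ψ u := by linarith
      positivity
  have hgs : g s ≤ g t₀ := hmono ⟨le_refl s, hst₀.le⟩ ⟨hst₀.le, le_refl t₀⟩ hst₀.le
  have hψs : 0 < ψ s := hbefore s hs0 hst₀
  have hgs_pos : 0 < g s := mul_pos hψs (Real.exp_pos _)
  have hgt₀ : g t₀ ≤ 0 :=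
    mul_nonpos_of_nonpos_of_nonneg hψt₀ (Real.exp_pos _).le
  linarith
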